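/- For all (k,m) ∈ 𝒟, the successor-time identities hold: t_{k,m} + 2^{−2k} = t_{k+1,2m}, and if m is even then t_{k,m} + 2^{1−2k} = t_{k,m+1}. -/

import Mathlib

noncomputable section

/-- Membership in the dyadic index set `𝒟 = {(k,m) : k ≥ 1, 0 ≤ m < 2^k}`. -/
def inD (p : ℕ × ℤ) : Prop := 1 ≤ p.1 ∧ 0 ≤ p.2 ∧ p.2 < 2 ^ p.1

/-- The dyadic index set `𝒟`. -/
def DyadicIndex : Type := {p : ℕ × ℤ // inD p}

/-- The time order `<_time`: compare the dyadic rationals `m 2^{-k}`,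
breaking ties by the smaller level `k`. -/
def ltTime (p q : ℕ × ℤ) : Prop :=
  (p.2 : ℝ) / 2 ^ p.1 < (q.2 : ℝ) / 2 ^ q.1 ∨
    ((p.2 : ℝ) / 2 ^ p.1 = (q.2 : ℝ) / 2 ^ q.1 ∧ p.1 < q.1)

/-- The time `t_{k,m} = Σ_{(k',m') <_time (k,m)} 2^{-2k'}`. -/
noncomputable def tTime (k : ℕ) (m : ℤ) : ℝ :=
  ∑' p : {q : ℕ × ℤ // inD q ∧ ltTime q (k, m)}, (2 : ℝ) ^ (-(2 * (p.1.1 : ℤ)))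

namespace TAux

def fw : ℕ × ℤ → ℝ := fun p => (2 : ℝ) ^ (-(2 * (p.1 : ℤ)))

lemma fw_nonneg : 0 ≤ fw := fun p => by
  unfold fw; positivity

lemma div_lt_div_iff' (j l : ℕ) (n m : ℤ) :
    (n : ℝ) / 2 ^ j < (m : ℝ) / 2 ^ l ↔ n * 2 ^ l < m * 2 ^ j := by
  rw [div_lt_div_iff₀ (by positivity) (by positivity)]
  exact_mod_cast Iff.rfl

lemma div_eq_div_iff' (j l : ℕ) (n m : ℤ) :
    (n : ℝ) / 2 ^ j = (m : ℝ) / 2 ^ l ↔ n * 2 ^ l = m * 2 ^ j := by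
  rw [div_eq_div_iff (by positivity) (by positivity)]
  exact_mod_cast Iff.rfl

lemma summable_big : Summable (Set.indicator {q | inD q} fw) := by
  rw [summable_prod_of_nonneg (fun p => Set.indicator_nonneg (fun q _ => fw_nonneg q) _)]
  constructor
  · intro j
    apply summable_of_ne_finset_zero (s := Finset.Ico (0 : ℤ) (2 ^ j))
    intro n hn
    apply Set.indicator_of_notMem
    rintro ⟨-, h2, h3⟩
    exact hn (Finset.mem_Ico.2 ⟨h2, h3⟩)
  · apply Summable.of_nonneg_of_le
      (f := fun j : ℕ => (2 : ℝ) ^ j * (2 : ℝ) ^ (-(2 * (j : ℤ))))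
    · intro j
      exact tsum_nonneg fun n => Set.indicator_nonneg (fun q _ => fw_nonneg q) _
    · intro j
      rw [tsum_eq_sum (s := Finset.Ico (0 : ℤ) (2 ^ j))
        (by intro n hn
            apply Set.indicator_of_notMem
            rintro ⟨-, h2, h3⟩
            exact hn (Finset.mem_Ico.2 ⟨h2, h3⟩))]
      calc ∑ n ∈ Finset.Ico (0 : ℤ) (2 ^ j), Set.indicator {q | inD q} fw (j, n)
          ≤ ∑ _n ∈ Finset.Ico (0 : ℤ) (2 ^ j), (2 : ℝ) ^ (-(2 * (j : ℤ))) := by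
            apply Finset.sum_le_sum
            intro n _
            exact Set.indicator_le_self' (fun q _ => fw_nonneg q) _
        _ = (Finset.Ico (0 : ℤ) (2 ^ j)).card * (2 : ℝ) ^ (-(2 * (j : ℤ))) := by
            rw [Finset.sum_const, nsmul_eq_mul]
        _ ≤ (2 : ℝ) ^ j * (2 : ℝ) ^ (-(2 * (j : ℤ))) := by
            gcongr
            have hc : ((2 : ℤ) ^ j).toNat = 2 ^ j := by
              rw [show ((2 : ℤ) ^ j) = ((2 ^ j : ℕ) : ℤ) by push_cast; ring, Int.toNat_natCast]
            rw [Int.card_Ico, sub_zero, hc]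
            push_cast
            exact le_rfl
    · apply Summable.of_nonneg_of_le (f := fun j => ((1 : ℝ) / 2) ^ j)
        (fun j => by positivity)
      · intro j
        rw [show (2 : ℝ) ^ j * (2 : ℝ) ^ (-(2 * (j : ℤ))) = ((1:ℝ)/2) ^ j by
          rw [one_div, inv_pow, ← zpow_natCast (2:ℝ) j, ← zpow_neg,
            ← zpow_add₀ (two_ne_zero : (2:ℝ) ≠ 0)]
          congr 1
          ring]
      · exact summable_geometric_of_lt_one (by norm_num) (by norm_num)

lemma summable_sub {S : Set (ℕ × ℤ)} (hS : ∀ q ∈ S, inD q) :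
    Summable (Set.indicator S fw) := by
  have h2 : S ∩ {q | inD q} = S := Set.inter_eq_left.2 hS
  have := summable_big.indicator S
  rwa [Set.indicator_indicator, h2] at this

lemma tTime_eq (k : ℕ) (m : ℤ) :
    tTime k m = ∑' p, Set.indicator {q | inD q ∧ ltTime q (k, m)} fw p :=
  tsum_subtype _ fw

lemma notMem_self (k : ℕ) (m : ℤ) : ((k, m) : ℕ × ℤ) ∉ {q | inD q ∧ ltTime q (k, m)} := by
  rintro ⟨-, h | ⟨-, h⟩⟩
  · exact lt_irrefl _ h
  · exact lt_irrefl _ h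

lemma set_succ_level (k : ℕ) (m : ℤ) (h : inD (k, m)) :
    {q | inD q ∧ ltTime q (k + 1, 2 * m)} =
      insert ((k, m) : ℕ × ℤ) {q | inD q ∧ ltTime q (k, m)} := by
  have hval : ((2 * m : ℤ) : ℝ) / 2 ^ (k + 1) = (m : ℝ) / 2 ^ k := by
    have h1 : ((2 * m : ℤ) : ℝ) = 2 * (m : ℝ) := by push_cast; ring
    rw [h1, pow_succ]
    field_simp
  ext ⟨j, n⟩
  simp only [Set.mem_setOf_eq, Set.mem_insert_iff, ltTime, hval]
  constructor
  · rintro ⟨hD, hv | ⟨he, hj⟩⟩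
    · exact Or.inr ⟨hD, Or.inl hv⟩
    · rcases lt_or_eq_of_le (Nat.lt_succ_iff.1 hj) with hj' | rfl
      · exact Or.inr ⟨hD, Or.inr ⟨he, hj'⟩⟩
      · left
        have hn : n = m := by
          have := (div_eq_div_iff' j j n m).1 he
          exact mul_right_cancel₀ (by positivity) this
        rw [hn]
  · rintro (heq | ⟨hD, hv | ⟨he, hj⟩⟩)
    · cases heq
      exact ⟨h, Or.inr ⟨rfl, Nat.lt_succ_self _⟩⟩
    · exact ⟨hD, Or.inl hv⟩
    · exact ⟨hD, Or.inr ⟨he, hj.trans (Nat.lt_succ_self k)⟩⟩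

lemma part1 (k : ℕ) (m : ℤ) (h : inD (k, m)) :
    tTime k m + (2 : ℝ) ^ (-(2 * (k : ℤ))) = tTime (k + 1) (2 * m) := by
  classical
  rw [tTime_eq, tTime_eq, set_succ_level k m h]
  set S := {q | inD q ∧ ltTime q (k, m)} with hSdef
  have hnot := notMem_self k m
  have hfun : Set.indicator (insert ((k, m) : ℕ × ℤ) S) fw =
      fun p => S.indicator fw p + (if p = ((k, m) : ℕ × ℤ) then fw (k, m) else 0) := by
    funext p
    by_cases hp : p = ((k, m) : ℕ × ℤ)
    · subst hp
      rw [Set.indicator_of_mem (Set.mem_insert _ _), Set.indicator_of_notMem hnot,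
        if_pos rfl, zero_add]
    · simp [Set.indicator_apply, Set.mem_insert_iff, hp]
  have hs1 : Summable (S.indicator fw) := summable_sub (fun q hq => hq.1)
  have hs2 : Summable (fun p : ℕ × ℤ => if p = ((k, m) : ℕ × ℤ) then fw (k, m) else 0) :=
    summable_of_ne_finset_zero (s := {((k, m) : ℕ × ℤ)})
      (fun b hb => if_neg (by simpa using hb))
  rw [hfun, Summable.tsum_add hs1 hs2, tsum_ite_eq]
  rfl

lemma subset_succ (k : ℕ) (m : ℤ) :
    {q | inD q ∧ ltTime q (k, m)} ⊆ {q | inD q ∧ ltTime q (k, m + 1)} := by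
  have hww : (m : ℝ) / 2 ^ k < ((m + 1 : ℤ) : ℝ) / 2 ^ k := by
    apply (div_lt_div_iff' k k m (m + 1)).2
    have := pow_pos (show (0:ℤ) < 2 by norm_num) k
    nlinarith
  rintro ⟨j, n⟩ ⟨hD, hv | ⟨he, hj⟩⟩
  · exact ⟨hD, Or.inl (hv.trans hww)⟩
  · exact ⟨hD, Or.inl (he.trans_lt hww)⟩

lemma T_mem_inD (k : ℕ) (m : ℤ) (h : inD (k, m)) {j : ℕ} {n : ℤ}
    (hkj : k ≤ j) (hlo : m * 2 ^ (j - k) ≤ n) (hhi : n < (m + 1) * 2 ^ (j - k)) :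
    inD (j, n) := by
  obtain ⟨hk1, hm0, hmlt⟩ := h
  refine ⟨hk1.trans hkj, le_trans (mul_nonneg hm0 (by positivity)) hlo, ?_⟩
  have hsplit : (2 : ℤ) ^ j = 2 ^ (j - k) * 2 ^ k := by
    rw [← pow_add, Nat.sub_add_cancel hkj]
  calc n < (m + 1) * 2 ^ (j - k) := hhi
    _ ≤ 2 ^ k * 2 ^ (j - k) := by
        have h1 : m + 1 ≤ 2 ^ k := hmlt
        have h2 : (0:ℤ) < 2 ^ (j - k) := pow_pos (by norm_num) _
        nlinarith
    _ = 2 ^ j := by rw [hsplit]; ring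

lemma setT (k : ℕ) (m : ℤ) (h : inD (k, m)) (hm : Even m) :
    {q | inD q ∧ ltTime q (k, m + 1)} \ {q | inD q ∧ ltTime q (k, m)} =
      {q : ℕ × ℤ | k ≤ q.1 ∧ m * 2 ^ (q.1 - k) ≤ q.2 ∧ q.2 < (m + 1) * 2 ^ (q.1 - k)} := by
  ext ⟨j, n⟩
  simp only [Set.mem_diff, Set.mem_setOf_eq]
  constructor
  · rintro ⟨⟨hD, hA⟩, hB⟩
    have hnlt : ¬ ltTime (j, n) (k, m) := fun hl => hB ⟨hD, hl⟩
    rw [ltTime, not_or] at hnlt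
    obtain ⟨hge, hne⟩ := hnlt
    have hge' : m * 2 ^ j ≤ n * 2 ^ k := by
      by_contra hc
      push_neg at hc
      exact hge ((div_lt_div_iff' j k n m).2 (by exact_mod_cast hc))
    have hA' : n * 2 ^ k < (m + 1) * 2 ^ j := by
      rcases hA with hv | ⟨he, hj⟩
      · exact (div_lt_div_iff' j k n (m + 1)).1 hv
      · exfalso
        have he' : n * 2 ^ k = (m + 1) * 2 ^ j := (div_eq_div_iff' j k n (m + 1)).1 he
        have h2 : n * 2 ^ (k - j) = m + 1 := by
          have hx : n * 2 ^ (k - j) * 2 ^ j = (m + 1) * 2 ^ j := by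
            rw [mul_assoc, ← pow_add, Nat.sub_add_cancel hj.le]
            exact he'
          exact mul_right_cancel₀ (by positivity) hx
        have hev2 : Even ((2 : ℤ) ^ (k - j)) := by
          rcases Nat.exists_eq_succ_of_ne_zero (Nat.sub_ne_zero_of_lt hj) with ⟨t, ht⟩
          rw [ht, pow_succ]
          exact even_two.mul_left _
        have hev : Even ((m : ℤ) + 1) := h2 ▸ hev2.mul_left n
        exact (Int.even_add_one.1 hev) hm
    have hkj : k ≤ j := by
      by_contra hjk
      push_neg at hjk
      have hsplit : (2 : ℤ) ^ k = 2 ^ (k - j) * 2 ^ j := by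
        rw [← pow_add, Nat.sub_add_cancel hjk.le]
      have hp : (0:ℤ) < 2 ^ j := pow_pos (by norm_num) _
      have hlo : m ≤ n * 2 ^ (k - j) := by
        have : m * 2 ^ j ≤ n * 2 ^ (k - j) * 2 ^ j := by
          rw [mul_assoc, ← hsplit]; exact hge'
        exact le_of_mul_le_mul_right this hp
      have hhi : n * 2 ^ (k - j) < m + 1 := by
        have : n * 2 ^ (k - j) * 2 ^ j < (m + 1) * 2 ^ j := by
          rw [mul_assoc, ← hsplit]; exact hA'
        exact lt_of_mul_lt_mul_right this hp.le
      have heq : n * 2 ^ (k - j) = m := by omega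
      have heq' : n * 2 ^ k = m * 2 ^ j := by
        rw [hsplit, ← mul_assoc, heq]
      exact hne ⟨(div_eq_div_iff' j k n m).2 heq', hjk⟩
    have hsplit : (2 : ℤ) ^ j = 2 ^ (j - k) * 2 ^ k := by
      rw [← pow_add, Nat.sub_add_cancel hkj]
    have hp : (0:ℤ) < 2 ^ k := pow_pos (by norm_num) _
    refine ⟨hkj, ?_, ?_⟩
    · have : m * 2 ^ (j - k) * 2 ^ k ≤ n * 2 ^ k := by
        rw [mul_assoc, ← hsplit]; exact hge'
      exact le_of_mul_le_mul_right this hp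
    · have : n * 2 ^ k < (m + 1) * 2 ^ (j - k) * 2 ^ k := by
        rw [mul_assoc, ← hsplit]; exact hA'
      exact lt_of_mul_lt_mul_right this hp.le
  · rintro ⟨hkj, hlo, hhi⟩
    have hD : inD (j, n) := T_mem_inD k m h hkj hlo hhi
    have hsplit : (2 : ℤ) ^ j = 2 ^ (j - k) * 2 ^ k := by
      rw [← pow_add, Nat.sub_add_cancel hkj]
    refine ⟨⟨hD, Or.inl ?_⟩, ?_⟩
    · apply (div_lt_div_iff' j k n (m + 1)).2
      calc n * 2 ^ k ≤ ((m + 1) * 2 ^ (j - k) - 1) * 2 ^ k := by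
            have : n ≤ (m + 1) * 2 ^ (j - k) - 1 := by omega
            exact mul_le_mul_of_nonneg_right this (pow_pos (by norm_num) _).le
        _ < (m + 1) * 2 ^ j := by
            rw [hsplit]
            have hp : (0:ℤ) < 2 ^ k := pow_pos (by norm_num) _
            nlinarith
    · rintro ⟨-, hl | ⟨he, hj⟩⟩
      · have : n * 2 ^ k < m * 2 ^ j := (div_lt_div_iff' j k n m).1 hl
        rw [hsplit, ← mul_assoc] at this
        have hp : (0:ℤ) < 2 ^ k := pow_pos (by norm_num) _
        have := lt_of_mul_lt_mul_right this hp.le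
        omega
      · omega

lemma tsum_T (k : ℕ) (m : ℤ) (h : inD (k, m)) :
    ∑' p : ℕ × ℤ, Set.indicator
        {q : ℕ × ℤ | k ≤ q.1 ∧ m * 2 ^ (q.1 - k) ≤ q.2 ∧ q.2 < (m + 1) * 2 ^ (q.1 - k)} fw p
      = (2 : ℝ) ^ (1 - 2 * (k : ℤ)) := by
  set T := {q : ℕ × ℤ | k ≤ q.1 ∧ m * 2 ^ (q.1 - k) ≤ q.2 ∧ q.2 < (m + 1) * 2 ^ (q.1 - k)}
    with hT
  have hsub : ∀ q ∈ T, inD q := fun q hq => by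
    obtain ⟨h1, h2, h3⟩ := hq
    exact T_mem_inD k m h h1 h2 h3
  have hsum : Summable (T.indicator fw) := summable_sub hsub
  have hnn : 0 ≤ T.indicator fw := Set.indicator_nonneg (fun q _ => fw_nonneg q)
  have hrows : ∀ j : ℕ, Summable fun n : ℤ => T.indicator fw (j, n) := by
    intro j
    apply summable_of_ne_finset_zero (s := Finset.Ico (m * 2 ^ (j - k)) ((m + 1) * 2 ^ (j - k)))
    intro n hn
    apply Set.indicator_of_notMem
    rintro ⟨-, h2, h3⟩
    exact hn (Finset.mem_Ico.2 ⟨h2, h3⟩)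
  rw [Summable.tsum_prod' hsum hrows]
  have hrowval : ∀ j : ℕ, (∑' n : ℤ, T.indicator fw (j, n))
      = if k ≤ j then (2 : ℝ) ^ (j - k) * (2 : ℝ) ^ (-(2 * (j : ℤ))) else 0 := by
    intro j
    rw [tsum_eq_sum (s := Finset.Ico (m * 2 ^ (j - k)) ((m + 1) * 2 ^ (j - k)))
      (by intro n hn
          apply Set.indicator_of_notMem
          rintro ⟨-, h2, h3⟩
          exact hn (Finset.mem_Ico.2 ⟨h2, h3⟩))]
    by_cases hkj : k ≤ j
    · rw [if_pos hkj]
      have hval : ∀ n ∈ Finset.Ico (m * 2 ^ (j - k)) ((m + 1) * 2 ^ (j - k)),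
          T.indicator fw (j, n) = (2 : ℝ) ^ (-(2 * (j : ℤ))) := by
        intro n hn
        have hmem : ((j, n) : ℕ × ℤ) ∈ T :=
          ⟨hkj, (Finset.mem_Ico.1 hn).1, (Finset.mem_Ico.1 hn).2⟩
        rw [Set.indicator_of_mem hmem]
        rfl
      rw [Finset.sum_congr rfl hval, Finset.sum_const, nsmul_eq_mul, Int.card_Ico]
      congr 1
      have h1 : (m + 1) * 2 ^ (j - k) - m * 2 ^ (j - k) = ((2 : ℤ)) ^ (j - k) := by ring
      rw [h1, show ((2 : ℤ) ^ (j - k)) = ((2 ^ (j - k) : ℕ) : ℤ) by push_cast; ring,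
        Int.toNat_natCast]
      push_cast
      ring
    · rw [if_neg hkj]
      apply Finset.sum_eq_zero
      intro n hn
      exact Set.indicator_of_notMem (fun hmem => hkj hmem.1) _
  rw [tsum_congr hrowval]
  set F := fun j : ℕ => if k ≤ j then (2 : ℝ) ^ (j - k) * (2 : ℝ) ^ (-(2 * (j : ℤ))) else 0
    with hF
  have hFsum : Summable F :=
    (((summable_prod_of_nonneg hnn).1 hsum).2).congr hrowval
  have hshift := Summable.sum_add_tsum_nat_add (f := F) k hFsum
  have hzero : ∑ i ∈ Finset.range k, F i = 0 := by
    apply Finset.sum_eq_zero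
    intro i hi
    have := Finset.mem_range.1 hi
    exact if_neg (by omega)
  rw [hzero, zero_add] at hshift
  rw [← hshift]
  have hterm : ∀ i : ℕ, F (i + k) = (2 : ℝ) ^ (-(2 * (k : ℤ))) * ((1 : ℝ) / 2) ^ i := by
    intro i
    rw [hF]
    simp only [if_pos (Nat.le_add_left k i), Nat.add_sub_cancel]
    rw [one_div, inv_pow, ← zpow_natCast (2 : ℝ) i, ← zpow_neg,
      ← zpow_add₀ (two_ne_zero : (2:ℝ) ≠ 0), ← zpow_add₀ (two_ne_zero : (2:ℝ) ≠ 0)]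
    congr 1
    push_cast
    ring
  rw [tsum_congr hterm, tsum_mul_left, tsum_geometric_two]
  rw [show (1 - 2 * (k : ℤ)) = -(2 * (k : ℤ)) + 1 by ring,
    zpow_add₀ (two_ne_zero : (2:ℝ) ≠ 0)]
  ring

lemma part2 (k : ℕ) (m : ℤ) (h : inD (k, m)) (hm : Even m) :
    tTime k m + (2 : ℝ) ^ (1 - 2 * (k : ℤ)) = tTime k (m + 1) := by
  rw [tTime_eq, tTime_eq]
  set S1 := {q | inD q ∧ ltTime q (k, m)} with hS1
  set S2 := {q | inD q ∧ ltTime q (k, m + 1)} with hS2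
  have hsub : S1 ⊆ S2 := subset_succ k m
  have hdiff : Set.indicator S2 fw =
      fun p => S1.indicator fw p + (S2 \ S1).indicator fw p := by
    funext p
    by_cases h1 : p ∈ S1
    · rw [Set.indicator_of_mem (hsub h1), Set.indicator_of_mem h1,
        Set.indicator_of_notMem (fun hd => hd.2 h1), add_zero]
    · by_cases h2 : p ∈ S2
      · have hp2 : p ∈ S2 \ S1 := ⟨h2, h1⟩
        rw [Set.indicator_of_mem h2, Set.indicator_of_notMem h1,
          Set.indicator_of_mem hp2, zero_add]
      · rw [Set.indicator_of_notMem h2, Set.indicator_of_notMem h1,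
          Set.indicator_of_notMem (fun hd => h2 hd.1), add_zero]
  rw [hdiff, Summable.tsum_add (summable_sub fun q hq => hq.1)
    (summable_sub fun q hq => hq.1.1)]
  congr 1
  rw [hS1, hS2, setT k m h hm]
  exact (tsum_T k m h).symm

end TAux

/-- Successor-time identities: `t_{k,m} + 2^{-2k} = t_{k+1,2m}`,
and if `m` is even then `t_{k,m} + 2^{1-2k} = t_{k,m+1}`. -/

theorem tTime_successor (k : ℕ) (m : ℤ) (h : inD (k, m)) :
    tTime k m + (2 : ℝ) ^ (-(2 * (k : ℤ))) = tTime (k + 1) (2 * m) ∧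
    (Even m → tTime k m + (2 : ℝ) ^ (1 - 2 * (k : ℤ)) = tTime k (m + 1)) :=
  ⟨TAux.part1 k m h, fun hm => TAux.part2 k m h hm⟩

end
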